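/- Fix a finite distribution family $\mathcal{A}$ and tolerance $\tau > 0$. Suppose an algorithm makes $q < \frac{\tau^2}{\mathrm{Var}(\mathcal{A})} - 1$ correlation queries $\phi_1, \dots, \phi_q : \mathcal{X} \to [-1,1]$, and an adversarial oracle answers $0$ to each query. Then there exists $(f, \mathcal{D}) \in \mathcal{A}$ such that (a) $|\langle f, \phi_i \rangle_{\mathcal{D}}| < \tau$ for all $i \in [q]$ (so the oracle answers are valid within tolerance $\tau$), and (b) for any hypothesis $h : \mathcal{X} \to \mathbb{R}$ output by the algorithm, $|\langle f, \tilde{h} \rangle_{\mathcal{D}}| \le \tau$ where $\tilde{h}$ is the clamp of $h$ to $[-1,1]$. -/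

import Mathlib

open Finset

/-- The "variance" of a finite family of labeled distributions. -/
noncomputable def famVar {X ι : Type} [Fintype X] [Fintype ι]
    (F D : ι → X → ℝ) : ℝ :=
  sSup {v : ℝ | ∃ φ : X → ℝ, (∀ x, |φ x| ≤ 1) ∧
    v = (Fintype.card ι : ℝ)⁻¹ * ∑ a, (∑ x, D a x * (F a x * φ x)) ^ 2}

section Aux

variable {X ι : Type} [Fintype X] [Fintype ι]

lemma corr_abs_le (F D : ι → X → ℝ) (hD0 : ∀ a x, 0 ≤ D a x) (hD1 : ∀ a, ∑ x, D a x = 1)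
    (hF : ∀ a x, F a x = 1 ∨ F a x = -1) (φ : X → ℝ) (hφ : ∀ x, |φ x| ≤ 1) (a : ι) :
    |∑ x, D a x * (F a x * φ x)| ≤ 1 := by
  calc |∑ x, D a x * (F a x * φ x)| ≤ ∑ x, |D a x * (F a x * φ x)| :=
        Finset.abs_sum_le_sum_abs _ _
    _ ≤ ∑ x, D a x := by
        apply Finset.sum_le_sum
        intro x _
        rw [abs_mul, abs_of_nonneg (hD0 a x), abs_mul]
        have hFa : |F a x| = 1 := by rcases hF a x with h | h <;> simp [h]
        rw [hFa, one_mul]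
        nlinarith [hD0 a x, hφ x, abs_nonneg (φ x)]
    _ = 1 := hD1 a

lemma famVar_bdd (F D : ι → X → ℝ) (hD0 : ∀ a x, 0 ≤ D a x) (hD1 : ∀ a, ∑ x, D a x = 1)
    (hF : ∀ a x, F a x = 1 ∨ F a x = -1) :
    BddAbove {v : ℝ | ∃ φ : X → ℝ, (∀ x, |φ x| ≤ 1) ∧
      v = (Fintype.card ι : ℝ)⁻¹ * ∑ a, (∑ x, D a x * (F a x * φ x)) ^ 2} := by
  refine ⟨1, ?_⟩
  rintro v ⟨φ, hφ, rfl⟩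
  have hsum : ∑ a : ι, (∑ x, D a x * (F a x * φ x)) ^ 2 ≤ (Fintype.card ι : ℝ) := by
    calc ∑ a : ι, (∑ x, D a x * (F a x * φ x)) ^ 2 ≤ ∑ _a : ι, (1 : ℝ) := by
          apply Finset.sum_le_sum
          intro a _
          have := corr_abs_le F D hD0 hD1 hF φ hφ a
          nlinarith [abs_nonneg (∑ x, D a x * (F a x * φ x)),
            sq_abs (∑ x, D a x * (F a x * φ x))]
      _ = (Fintype.card ι : ℝ) := by simp
  rcases Nat.eq_zero_or_pos (Fintype.card ι) with hc | hc
  · simp [hc]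
  · have hc' : (0 : ℝ) < (Fintype.card ι : ℝ) := by exact_mod_cast hc
    rw [inv_mul_le_iff₀ hc', mul_one]
    exact hsum

lemma famVar_nonneg (F D : ι → X → ℝ) (hD0 : ∀ a x, 0 ≤ D a x) (hD1 : ∀ a, ∑ x, D a x = 1)
    (hF : ∀ a x, F a x = 1 ∨ F a x = -1) : 0 ≤ famVar F D := by
  apply le_csSup (famVar_bdd F D hD0 hD1 hF)
  exact ⟨fun _ => 0, fun x => by simp, by simp⟩

lemma sum_corr_sq_le (F D : ι → X → ℝ) (hD0 : ∀ a x, 0 ≤ D a x) (hD1 : ∀ a, ∑ x, D a x = 1)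
    (hF : ∀ a x, F a x = 1 ∨ F a x = -1) (φ : X → ℝ) (hφ : ∀ x, |φ x| ≤ 1) :
    ∑ a : ι, (∑ x, D a x * (F a x * φ x)) ^ 2 ≤ famVar F D * (Fintype.card ι : ℝ) := by
  have hmem : (Fintype.card ι : ℝ)⁻¹ * ∑ a : ι, (∑ x, D a x * (F a x * φ x)) ^ 2 ∈
      {v : ℝ | ∃ φ : X → ℝ, (∀ x, |φ x| ≤ 1) ∧
        v = (Fintype.card ι : ℝ)⁻¹ * ∑ a, (∑ x, D a x * (F a x * φ x)) ^ 2} := ⟨φ, hφ, rfl⟩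
  have hle := le_csSup (famVar_bdd F D hD0 hD1 hF) hmem
  rcases Nat.eq_zero_or_pos (Fintype.card ι) with hc | hc
  · have : (Finset.univ : Finset ι) = ∅ := by
      rwa [← Finset.card_eq_zero, Finset.card_univ]
    simp [this, hc]
  · have hc' : (0 : ℝ) < (Fintype.card ι : ℝ) := by exact_mod_cast hc
    rw [inv_mul_le_iff₀ hc'] at hle
    have heq : famVar F D * (Fintype.card ι : ℝ) = (Fintype.card ι : ℝ) *
        sSup {v : ℝ | ∃ φ : X → ℝ, (∀ x, |φ x| ≤ 1) ∧
          v = (Fintype.card ι : ℝ)⁻¹ * ∑ a, (∑ x, D a x * (F a x * φ x)) ^ 2} := by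
      rw [famVar, mul_comm]
    rw [heq]
    exact hle

lemma count_bad_le (F D : ι → X → ℝ) (hD0 : ∀ a x, 0 ≤ D a x) (hD1 : ∀ a, ∑ x, D a x = 1)
    (hF : ∀ a x, F a x = 1 ∨ F a x = -1) (φ : X → ℝ) (hφ : ∀ x, |φ x| ≤ 1)
    (τ : ℝ) (hτ : 0 < τ) :
    ((Finset.univ.filter fun a : ι => τ ≤ |∑ x, D a x * (F a x * φ x)|).card : ℝ) * τ ^ 2 ≤
      famVar F D * (Fintype.card ι : ℝ) := by
  have h1 : ((Finset.univ.filter fun a : ι => τ ≤ |∑ x, D a x * (F a x * φ x)|).card : ℝ) * τ ^ 2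
      ≤ ∑ a ∈ Finset.univ.filter fun a : ι => τ ≤ |∑ x, D a x * (F a x * φ x)|,
        (∑ x, D a x * (F a x * φ x)) ^ 2 := by
    have := Finset.card_nsmul_le_sum
      (Finset.univ.filter fun a : ι => τ ≤ |∑ x, D a x * (F a x * φ x)|)
      (fun a => (∑ x, D a x * (F a x * φ x)) ^ 2) (τ ^ 2) ?_
    · rw [nsmul_eq_mul] at this
      exact this
    · intro a ha
      have h2 := (Finset.mem_filter.mp ha).2
      show τ ^ 2 ≤ (∑ x, D a x * (F a x * φ x)) ^ 2
      nlinarith [sq_abs (∑ x, D a x * (F a x * φ x)),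
        sq_nonneg (|∑ x, D a x * (F a x * φ x)| - τ)]
  calc _ ≤ ∑ a ∈ Finset.univ.filter fun a : ι => τ ≤ |∑ x, D a x * (F a x * φ x)|,
        (∑ x, D a x * (F a x * φ x)) ^ 2 := h1
    _ ≤ ∑ a : ι, (∑ x, D a x * (F a x * φ x)) ^ 2 := by
        apply Finset.sum_le_sum_of_subset_of_nonneg (Finset.filter_subset _ _)
        intro a _ _; positivity
    _ ≤ famVar F D * (Fintype.card ι : ℝ) := sum_corr_sq_le F D hD0 hD1 hF φ hφ

end Aux

/-- if an algorithm makes `q < τ²/Var(A) - 1` correlation queries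
`φ₁,…,φ_q : X → [-1,1]` and the adversarial oracle answers `0` to each, then some
`(f,D) ∈ A` is consistent with all answers (`|⟨f,φᵢ⟩_D| < τ`) and, for any output
hypothesis `h`, its clamp `h̃` satisfies `|⟨f,h̃⟩_D| ≤ τ`. -/
theorem correlation_query_hardness {X ι : Type} [Fintype X] [Fintype ι] [Nonempty ι]
    (F D : ι → X → ℝ)
    (hD0 : ∀ a x, 0 ≤ D a x) (hD1 : ∀ a, ∑ x, D a x = 1)
    (hF : ∀ a x, F a x = 1 ∨ F a x = -1)
    (τ : ℝ) (hτ : 0 < τ) (q : ℕ)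
    (hq : (q : ℝ) < τ ^ 2 / famVar F D - 1)
    (φ : Fin q → X → ℝ) (hφ : ∀ i x, |φ i x| ≤ 1)
    (h : X → ℝ) :
    ∃ a : ι, (∀ i, |∑ x, D a x * (F a x * φ i x)| < τ) ∧
      |∑ x, D a x * (F a x * min (max (h x) (-1)) 1)| ≤ τ := by
  classical
  set V := famVar F D with hV
  have hV0 : 0 ≤ V := famVar_nonneg F D hD0 hD1 hF
  have hVpos : 0 < V := by
    rcases lt_or_eq_of_le hV0 with hp | he
    · exact hp
    · exfalso
      rw [← he, div_zero] at hq
      have : (0 : ℝ) ≤ (q : ℝ) := Nat.cast_nonneg q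
      linarith
  -- clamp of h
  set g : X → ℝ := fun x => min (max (h x) (-1)) 1 with hg
  have hgb : ∀ x, |g x| ≤ 1 := by
    intro x
    exact abs_le.mpr ⟨le_min (le_max_right _ _) (by norm_num), min_le_right _ _⟩
  -- bad sets
  set Bh : Finset ι := Finset.univ.filter fun a : ι => τ ≤ |∑ x, D a x * (F a x * g x)| with hBh
  set B : Fin q → Finset ι :=
    fun i => Finset.univ.filter fun a : ι => τ ≤ |∑ x, D a x * (F a x * φ i x)| with hB
  by_contra hcon
  push_neg at hcon
  have hcover : (Finset.univ : Finset ι) ⊆ Bh ∪ Finset.univ.biUnion B := by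
    intro a _
    by_cases hall : ∀ i, |∑ x, D a x * (F a x * φ i x)| < τ
    · have := hcon a hall
      refine Finset.mem_union_left _ ?_
      simp only [hBh, Finset.mem_filter, Finset.mem_univ, true_and]
      exact this.le
    · push_neg at hall
      obtain ⟨i, hi⟩ := hall
      refine Finset.mem_union_right _ ?_
      refine Finset.mem_biUnion.mpr ⟨i, Finset.mem_univ _, ?_⟩
      simp only [hB, Finset.mem_filter, Finset.mem_univ, true_and]
      exact hi
  have hτ2 : (0 : ℝ) < τ ^ 2 := by positivity
  set n : ℝ := (Fintype.card ι : ℝ) with hn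
  have hnpos : (0 : ℝ) < n := by
    have : 0 < Fintype.card ι := Fintype.card_pos
    rw [hn]
    exact_mod_cast this
  have hBhcard : (Bh.card : ℝ) * τ ^ 2 ≤ V * n :=
    count_bad_le F D hD0 hD1 hF g hgb τ hτ
  have hBcard : ∀ i, ((B i).card : ℝ) * τ ^ 2 ≤ V * n :=
    fun i => count_bad_le F D hD0 hD1 hF (φ i) (hφ i) τ hτ
  have hcardle : (Fintype.card ι : ℝ) ≤ (Bh.card : ℝ) + ∑ i : Fin q, ((B i).card : ℝ) := by
    have h1 : Fintype.card ι ≤ (Bh ∪ Finset.univ.biUnion B).card := by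
      rw [← Finset.card_univ]
      exact Finset.card_le_card hcover
    have h2 : (Bh ∪ Finset.univ.biUnion B).card ≤ Bh.card + (Finset.univ.biUnion B).card :=
      Finset.card_union_le _ _
    have h3 : (Finset.univ.biUnion B).card ≤ ∑ i : Fin q, (B i).card :=
      Finset.card_biUnion_le
    have := le_trans h1 (le_trans h2 (Nat.add_le_add_left h3 _))
    exact_mod_cast this
  -- multiply by τ²
  have hkey : n * τ ^ 2 ≤ ((q : ℝ) + 1) * (V * n) := by
    calc n * τ ^ 2 ≤ ((Bh.card : ℝ) + ∑ i : Fin q, ((B i).card : ℝ)) * τ ^ 2 := by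
          apply mul_le_mul_of_nonneg_right hcardle hτ2.le
      _ = (Bh.card : ℝ) * τ ^ 2 + ∑ i : Fin q, ((B i).card : ℝ) * τ ^ 2 := by
          rw [add_mul, Finset.sum_mul]
      _ ≤ V * n + ∑ i : Fin q, V * n := by
          apply add_le_add hBhcard
          exact Finset.sum_le_sum fun i _ => hBcard i
      _ = ((q : ℝ) + 1) * (V * n) := by
          rw [Finset.sum_const, Finset.card_univ, Fintype.card_fin, nsmul_eq_mul]
          ring
  have hq' : ((q : ℝ) + 1) * V < τ ^ 2 := by
    rw [div_sub' (ne_of_gt hVpos), lt_div_iff₀ hVpos] at hq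
    nlinarith
  nlinarith
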